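/- arXiv:1607.06279 — 2 statements merged into one kernel-verified Lean document; each statement's English description precedes it below -/
import Mathlib

section
/- Let E, F be Banach spaces, let 1 ≤ s ≤ q < ∞ and 0 < t ≤ p < ∞, and let P : E → F be a continuous m-homogeneous polynomial that is absolutely (t,s)-summing with constant C ≥ 0. Then for every positive integer n and all x₁,…,xₙ ∈ E, one has (Σ_{j=1}^n ‖P(x_j)‖^p)^{1/p} ≤ C · n^{m/s − m/q} · ‖(x_j)_{j=1}^n‖_{w,q}^m. -/
open Finset

/-- The weak `q`-norm `‖(x_k)_{k=1}^n‖_{w,q} = sup_{φ ∈ B_{E*}} (∑ |φ(x_k)|^q)^{1/q}`. -/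
noncomputable def weakNorm (𝕜 : Type*) [RCLike 𝕜] {E : Type*} [NormedAddCommGroup E]
    [NormedSpace 𝕜 E] {n : ℕ} (x : Fin n → E) (q : ℝ) : ℝ :=
  sSup {r : ℝ | ∃ φ : E →L[𝕜] 𝕜, ‖φ‖ ≤ 1 ∧ r = (∑ k, ‖φ (x k)‖ ^ q) ^ (1 / q)}

/-- ℓ^p norms decrease in the exponent. -/
lemma lp_le_lt {n : ℕ} {f : Fin n → ℝ} (hf : ∀ k, 0 ≤ f k) {t p : ℝ}
    (ht : 0 < t) (htp : t ≤ p) :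
    (∑ k, f k ^ p) ^ (1 / p) ≤ (∑ k, f k ^ t) ^ (1 / t) := by
  have hp : 0 < p := lt_of_lt_of_le ht htp
  set S := ∑ k, f k ^ t with hS
  have hS0 : 0 ≤ S := Finset.sum_nonneg fun k _ => Real.rpow_nonneg (hf k) t
  rcases eq_or_lt_of_le hS0 with h0 | hSpos
  · have hall : ∀ k, f k = 0 := by
      intro k
      have hz := (Finset.sum_eq_zero_iff_of_nonneg
        (fun k _ => Real.rpow_nonneg (hf k) t)).mp h0.symm k (Finset.mem_univ k)
      by_contra hne
      have hfk : 0 < f k := lt_of_le_of_ne (hf k) (Ne.symm hne)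
      exact absurd hz (ne_of_gt (Real.rpow_pos_of_pos hfk t))
    have hz : (∑ k, f k ^ p) = 0 := by
      apply Finset.sum_eq_zero; intro k _
      rw [hall k]; exact Real.zero_rpow hp.ne'
    rw [hz, Real.zero_rpow (by positivity)]
    exact Real.rpow_nonneg hS0 _
  · have key : ∑ k, f k ^ p ≤ S ^ (p / t) := by
      have hstep : ∀ k, f k ^ p ≤ f k ^ t * S ^ (p / t - 1) := by
        intro k
        have hle : f k ^ t ≤ S :=
          Finset.single_le_sum (fun k _ => Real.rpow_nonneg (hf k) t) (Finset.mem_univ k)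
        have he : t + t * (p / t - 1) = p := by field_simp; ring
        have h1 : f k ^ p = f k ^ t * (f k ^ t) ^ (p / t - 1) := by
          rw [← Real.rpow_mul (hf k), ← Real.rpow_add' (hf k) (by rw [he]; exact hp.ne')]
          rw [he]
        rw [h1]
        apply mul_le_mul_of_nonneg_left _ (Real.rpow_nonneg (hf k) t)
        exact Real.rpow_le_rpow (Real.rpow_nonneg (hf k) t) hle
          (by rw [sub_nonneg]; exact (one_le_div ht).mpr htp)
      calc ∑ k, f k ^ p ≤ ∑ k, f k ^ t * S ^ (p / t - 1) :=
            Finset.sum_le_sum fun k _ => hstep k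
        _ = S * S ^ (p / t - 1) := by rw [← Finset.sum_mul]
        _ = S ^ (1:ℝ) * S ^ (p / t - 1) := by rw [Real.rpow_one]
        _ = S ^ (p / t) := by rw [← Real.rpow_add hSpos]; congr 1; ring
    calc (∑ k, f k ^ p) ^ (1 / p)
        ≤ (S ^ (p / t)) ^ (1 / p) :=
          Real.rpow_le_rpow (Finset.sum_nonneg fun k _ => Real.rpow_nonneg (hf k) p)
            key (by positivity)
      _ = S ^ (1 / t) := by
          rw [← Real.rpow_mul hS0]; congr 1; field_simp

/-- Hölder against constants: comparison of ℓ^s and ℓ^q norms with the factor `n^(1/s-1/q)`. -/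
lemma holder_const {n : ℕ} {a : Fin n → ℝ} (ha : ∀ k, 0 ≤ a k) {s q : ℝ}
    (hs : 0 < s) (hsq : s ≤ q) :
    (∑ k, a k ^ s) ^ (1 / s) ≤ (n : ℝ) ^ (1 / s - 1 / q) * (∑ k, a k ^ q) ^ (1 / q) := by
  have hq : 0 < q := hs.trans_le hsq
  have h := Real.inner_le_weight_mul_Lp_of_nonneg Finset.univ
      (p := q / s) ((one_le_div hs).mpr hsq) (fun _ => (1:ℝ)) (fun k => a k ^ s)
      (fun _ => zero_le_one) (fun k => Real.rpow_nonneg (ha k) s)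
  simp only [one_mul, Finset.sum_const, Finset.card_univ, Fintype.card_fin,
    nsmul_eq_mul, mul_one] at h
  have hrw : ∀ k : Fin n, (a k ^ s) ^ (q / s) = a k ^ q := by
    intro k
    rw [← Real.rpow_mul (ha k)]
    congr 1
    field_simp
  simp only [hrw] at h
  have hQ0 : (0:ℝ) ≤ ∑ k, a k ^ q := Finset.sum_nonneg fun k _ => Real.rpow_nonneg (ha k) q
  have hn0 : (0:ℝ) ≤ (n:ℝ) := Nat.cast_nonneg n
  calc (∑ k, a k ^ s) ^ (1 / s)
      ≤ ((n:ℝ) ^ (1 - (q / s)⁻¹) * (∑ k, a k ^ q) ^ (q / s)⁻¹) ^ (1 / s) :=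
        Real.rpow_le_rpow (Finset.sum_nonneg fun k _ => Real.rpow_nonneg (ha k) s) h
          (by positivity)
    _ = (n : ℝ) ^ (1 / s - 1 / q) * (∑ k, a k ^ q) ^ (1 / q) := by
        rw [Real.mul_rpow (by positivity) (by positivity),
          ← Real.rpow_mul hn0, ← Real.rpow_mul hQ0]
        have e1 : (1 - (q / s)⁻¹) * (1 / s) = 1 / s - 1 / q := by
          field_simp
        have e2 : (q / s)⁻¹ * (1 / s) = 1 / q := by
          rw [inv_div]; field_simp
        rw [e1, e2]

lemma weakSet_bddAbove (𝕜 : Type*) [RCLike 𝕜] {E : Type*} [NormedAddCommGroup E]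
    [NormedSpace 𝕜 E] {n : ℕ} (x : Fin n → E) {r : ℝ} (hr : 0 < r) :
    BddAbove {u : ℝ | ∃ φ : E →L[𝕜] 𝕜, ‖φ‖ ≤ 1 ∧ u = (∑ k, ‖φ (x k)‖ ^ r) ^ (1 / r)} := by
  refine ⟨(∑ k, ‖x k‖ ^ r) ^ (1 / r), ?_⟩
  rintro u ⟨φ, hφ, rfl⟩
  apply Real.rpow_le_rpow (Finset.sum_nonneg fun k _ => Real.rpow_nonneg (norm_nonneg _) r)
    _ (by positivity)
  apply Finset.sum_le_sum
  intro k _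
  apply Real.rpow_le_rpow (norm_nonneg _) _ hr.le
  calc ‖φ (x k)‖ ≤ ‖φ‖ * ‖x k‖ := φ.le_opNorm _
    _ ≤ 1 * ‖x k‖ := mul_le_mul_of_nonneg_right hφ (norm_nonneg _)
    _ = ‖x k‖ := one_mul _

lemma weakSet_zero_mem (𝕜 : Type*) [RCLike 𝕜] {E : Type*} [NormedAddCommGroup E]
    [NormedSpace 𝕜 E] {n : ℕ} (x : Fin n → E) {r : ℝ} (hr : 0 < r) :
    (0:ℝ) ∈ {u : ℝ | ∃ φ : E →L[𝕜] 𝕜, ‖φ‖ ≤ 1 ∧ u = (∑ k, ‖φ (x k)‖ ^ r) ^ (1 / r)} := by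
  refine ⟨0, by simp, ?_⟩
  have : ∀ k : Fin n, ‖(0 : E →L[𝕜] 𝕜) (x k)‖ ^ r = 0 := by
    intro k
    simp [Real.zero_rpow hr.ne']
  rw [Finset.sum_congr rfl fun k _ => this k, Finset.sum_const_zero,
    Real.zero_rpow (by positivity : (1/r : ℝ) ≠ 0)]

lemma weakNorm_nonneg' (𝕜 : Type*) [RCLike 𝕜] {E : Type*} [NormedAddCommGroup E]
    [NormedSpace 𝕜 E] {n : ℕ} (x : Fin n → E) {r : ℝ} (hr : 0 < r) :
    0 ≤ weakNorm 𝕜 x r :=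
  le_csSup (weakSet_bddAbove 𝕜 x hr) (weakSet_zero_mem 𝕜 x hr)

lemma weakNorm_le (𝕜 : Type*) [RCLike 𝕜] {E : Type*} [NormedAddCommGroup E]
    [NormedSpace 𝕜 E] {n : ℕ} (x : Fin n → E) {s q : ℝ} (hs : 0 < s) (hsq : s ≤ q) :
    weakNorm 𝕜 x s ≤ (n : ℝ) ^ (1 / s - 1 / q) * weakNorm 𝕜 x q := by
  have hq : 0 < q := hs.trans_le hsq
  apply csSup_le ⟨0, weakSet_zero_mem 𝕜 x hs⟩
  rintro u ⟨φ, hφ, rfl⟩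
  calc (∑ k, ‖φ (x k)‖ ^ s) ^ (1 / s)
      ≤ (n : ℝ) ^ (1 / s - 1 / q) * (∑ k, ‖φ (x k)‖ ^ q) ^ (1 / q) :=
        holder_const (fun k => norm_nonneg _) hs hsq
    _ ≤ (n : ℝ) ^ (1 / s - 1 / q) * weakNorm 𝕜 x q := by
        apply mul_le_mul_of_nonneg_left _ (by positivity)
        exact le_csSup (weakSet_bddAbove 𝕜 x hq) ⟨φ, hφ, rfl⟩

theorem stmt6 {𝕜 : Type*} [RCLike 𝕜] {m : ℕ} (hm : 1 ≤ m)
    {E : Type*} [NormedAddCommGroup E] [NormedSpace 𝕜 E] [CompleteSpace E]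
    {F : Type*} [NormedAddCommGroup F] [NormedSpace 𝕜 F] [CompleteSpace F]
    {s q p t : ℝ} (hs : 1 ≤ s) (hsq : s ≤ q) (ht : 0 < t) (htp : t ≤ p)
    {C : ℝ} (hC : 0 ≤ C)
    (P : E → F)
    (hP : ∃ T : ContinuousMultilinearMap 𝕜 (fun _ : Fin m => E) F,
      ∀ x : E, P x = T (fun _ => x))
    (hsum : ∀ (n : ℕ), 0 < n → ∀ x : Fin n → E,
      (∑ k, ‖P (x k)‖ ^ t) ^ (1 / t) ≤ C * (weakNorm 𝕜 x s) ^ m) :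
    ∀ (n : ℕ), 0 < n → ∀ x : Fin n → E,
      (∑ j, ‖P (x j)‖ ^ p) ^ (1 / p)
        ≤ C * (n : ℝ) ^ ((m : ℝ) / s - m / q) * (weakNorm 𝕜 x q) ^ m := by
  intro n hn x
  have hs0 : (0:ℝ) < s := lt_of_lt_of_le one_pos hs
  have hq0 : (0:ℝ) < q := hs0.trans_le hsq
  have hWq : 0 ≤ weakNorm 𝕜 x q := weakNorm_nonneg' 𝕜 x hq0
  have hWs : 0 ≤ weakNorm 𝕜 x s := weakNorm_nonneg' 𝕜 x hs0
  have hn0 : (0:ℝ) ≤ (n:ℝ) := Nat.cast_nonneg n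
  calc (∑ j, ‖P (x j)‖ ^ p) ^ (1 / p)
      ≤ (∑ j, ‖P (x j)‖ ^ t) ^ (1 / t) :=
        lp_le_lt (fun k => norm_nonneg _) ht htp
    _ ≤ C * (weakNorm 𝕜 x s) ^ m := hsum n hn x
    _ ≤ C * ((n : ℝ) ^ (1 / s - 1 / q) * weakNorm 𝕜 x q) ^ m := by
        apply mul_le_mul_of_nonneg_left _ hC
        exact pow_le_pow_left₀ hWs (weakNorm_le 𝕜 x hs0 hsq) m
    _ = C * (n : ℝ) ^ ((m : ℝ) / s - m / q) * (weakNorm 𝕜 x q) ^ m := by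
        rw [mul_pow, ← Real.rpow_natCast ((n:ℝ) ^ (1/s - 1/q)) m,
          ← Real.rpow_mul hn0]
        rw [mul_assoc]
        congr 2
        ring
end

section
/- Let E₁,…,E_m, F be Banach spaces, suppose F has cotype r (2 ≤ r < ∞), let 1 ≤ s < 2 with m < s/(r(s−1)) (this condition is vacuous for s = 1), and let t ≥ sr/(s − msr + mr). Then every continuous m-linear operator T : E₁×⋯×E_m → F is multiple (t,s)-summing, i.e., there is a constant C ≥ 0 (depending on T) such that (Σ_{k₁,…,k_m=1}^n ‖T(x_{k₁}^{(1)},…,x_{k_m}^{(m)})‖^t)^{1/t} ≤ C ∏_{i=1}^m ‖(x_k^{(i)})_{k=1}^n‖_{w,s} for all positive integers n and all vectors x_k^{(i)} ∈ E_i. -/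
open Finset

/-- A Banach space `F` has cotype `r` if there is `K ≥ 0` such that
`(∑ ‖x_k‖^r)^{1/r} ≤ K (∫₀¹ ‖∑ r_k(t) x_k‖² dt)^{1/2}`, where
`r_k(t) = sign (sin (2^k π t))` is the `k`-th Rademacher function. -/
def HasCotype (F : Type*) [NormedAddCommGroup F] [NormedSpace ℝ F] (r : ℝ) : Prop :=
  ∃ K : ℝ, 0 ≤ K ∧ ∀ (n : ℕ) (x : Fin n → F),
    (∑ k, ‖x k‖ ^ r) ^ (1 / r) ≤
      K * (∫ u in (0:ℝ)..1,
            ‖∑ k : Fin n, Real.sign (Real.sin (2 ^ (k.1 + 1) * Real.pi * u)) • x k‖ ^ (2 : ℝ))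
          ^ ((1 : ℝ) / 2)

open MeasureTheory
open scoped ENNReal NNReal


section weakNormLemmas

variable (𝕜 : Type*) [RCLike 𝕜] {E : Type*} [NormedAddCommGroup E] [NormedSpace 𝕜 E] {n : ℕ}

lemma weakNorm_set_nonempty (x : Fin n → E) {q : ℝ} (hq : 0 < q) :
    (0:ℝ) ∈ {r : ℝ | ∃ φ : E →L[𝕜] 𝕜, ‖φ‖ ≤ 1 ∧ r = (∑ k, ‖φ (x k)‖ ^ q) ^ (1 / q)} := by
  refine ⟨0, by simp, ?_⟩
  simp [Real.zero_rpow hq.ne']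
  exact (Real.zero_rpow (inv_ne_zero hq.ne')).symm

lemma weakNorm_bddAbove (x : Fin n → E) {q : ℝ} (hq : 0 < q) :
    BddAbove {r : ℝ | ∃ φ : E →L[𝕜] 𝕜, ‖φ‖ ≤ 1 ∧ r = (∑ k, ‖φ (x k)‖ ^ q) ^ (1 / q)} := by
  refine ⟨(∑ k, ‖x k‖ ^ q) ^ (1 / q), ?_⟩
  rintro r ⟨φ, hφ, rfl⟩
  refine Real.rpow_le_rpow (sum_nonneg fun k _ => Real.rpow_nonneg (norm_nonneg _) _)
    (sum_le_sum fun k _ => Real.rpow_le_rpow (norm_nonneg _) ?_ hq.le) (by positivity)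
  calc ‖φ (x k)‖ ≤ ‖φ‖ * ‖x k‖ := φ.le_opNorm _
  _ ≤ 1 * ‖x k‖ := by gcongr
  _ = ‖x k‖ := one_mul _

lemma le_weakNorm (x : Fin n → E) {q : ℝ} (hq : 0 < q) {φ : E →L[𝕜] 𝕜} (hφ : ‖φ‖ ≤ 1) :
    (∑ k, ‖φ (x k)‖ ^ q) ^ (1 / q) ≤ weakNorm 𝕜 x q :=
  le_csSup (weakNorm_bddAbove 𝕜 x hq) ⟨φ, hφ, rfl⟩

lemma weakNorm_nonneg (x : Fin n → E) {q : ℝ} (hq : 0 < q) : 0 ≤ weakNorm 𝕜 x q :=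
  le_csSup (weakNorm_bddAbove 𝕜 x hq) (weakNorm_set_nonempty 𝕜 x hq)

lemma norm_sum_smul_le_weakNorm (x : Fin n → E) (c : Fin n → ℝ) (hc : ∀ k, |c k| ≤ 1) :
    ‖∑ k, ((c k : ℝ) : 𝕜) • x k‖ ≤ weakNorm 𝕜 x 1 := by
  obtain ⟨g, hg1, hgx⟩ := exists_dual_vector'' 𝕜 (∑ k, ((c k : ℝ) : 𝕜) • x k)
  have hnorm : ‖∑ k, ((c k : ℝ) : 𝕜) • x k‖ = ‖g (∑ k, ((c k : ℝ) : 𝕜) • x k)‖ := by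
    rw [hgx]; simp
  rw [hnorm, map_sum]
  calc ‖∑ k, g (((c k : ℝ) : 𝕜) • x k)‖ ≤ ∑ k, ‖g (((c k : ℝ) : 𝕜) • x k)‖ := norm_sum_le _ _
  _ ≤ ∑ k, ‖g (x k)‖ := by
      refine sum_le_sum fun k _ => ?_
      rw [g.map_smul, norm_smul, RCLike.norm_ofReal]
      calc |c k| * ‖g (x k)‖ ≤ 1 * ‖g (x k)‖ := by gcongr; exact hc k
      _ = ‖g (x k)‖ := one_mul _
  _ ≤ weakNorm 𝕜 x 1 := by
      have := le_weakNorm 𝕜 x one_pos hg1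
      simpa using this

lemma weakNorm_smul_le (x : Fin n → E) (σ : Fin n → ℝ) (hσ : ∀ k, 0 ≤ σ k) {s p : ℝ}
    (hcj : s.HolderConjugate p) :
    weakNorm 𝕜 (fun k => ((σ k : ℝ) : 𝕜) • x k) 1
      ≤ (∑ k, σ k ^ p) ^ (1 / p) * weakNorm 𝕜 x s := by
  refine csSup_le ⟨0, weakNorm_set_nonempty 𝕜 _ one_pos⟩ ?_
  rintro r ⟨φ, hφ, rfl⟩
  have h1 : (∑ k, ‖φ (((σ k : ℝ) : 𝕜) • x k)‖ ^ (1:ℝ)) = ∑ k, σ k * ‖φ (x k)‖ := by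
    refine sum_congr rfl fun k _ => ?_
    rw [Real.rpow_one, φ.map_smul, norm_smul, RCLike.norm_ofReal, abs_of_nonneg (hσ k)]
  rw [h1, one_div_one, Real.rpow_one]
  calc ∑ k, σ k * ‖φ (x k)‖
      ≤ (∑ k, σ k ^ p) ^ (1 / p) * (∑ k, ‖φ (x k)‖ ^ s) ^ (1 / s) :=
        Real.inner_le_Lp_mul_Lq_of_nonneg univ hcj.symm (fun k _ => hσ k)
          (fun k _ => norm_nonneg _)
  _ ≤ (∑ k, σ k ^ p) ^ (1 / p) * weakNorm 𝕜 x s := by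
      have h2 : (0:ℝ) ≤ (∑ k, σ k ^ p) ^ (1 / p) :=
        Real.rpow_nonneg (sum_nonneg fun k _ => Real.rpow_nonneg (hσ k) _) _
      exact mul_le_mul_of_nonneg_left (le_weakNorm 𝕜 x hcj.pos hφ) h2

end weakNormLemmas

/-- ℓ^p-norm monotonicity in the exponent. -/
lemma lp_norm_mono {ι : Type*} [Fintype ι] (a : ι → ℝ) (ha : ∀ k, 0 ≤ a k) {t0 t : ℝ}
    (ht00 : 0 < t0) (htt : t0 ≤ t) :
    (∑ k, a k ^ t) ^ (1 / t) ≤ (∑ k, a k ^ t0) ^ (1 / t0) := by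
  have ht0 : 0 < t := lt_of_lt_of_le ht00 htt
  set S := (∑ k, a k ^ t0) ^ (1 / t0) with hS
  have hsum0 : 0 ≤ ∑ k, a k ^ t0 := sum_nonneg fun k _ => Real.rpow_nonneg (ha k) _
  have hS0 : 0 ≤ S := Real.rpow_nonneg hsum0 _
  rcases eq_or_lt_of_le hS0 with hS0' | hSpos
  · have hsum : (∑ k, a k ^ t0) = 0 := by
      by_contra h
      have h1 : (0:ℝ) < ∑ k, a k ^ t0 := lt_of_le_of_ne hsum0 (Ne.symm h)
      have h2 : 0 < S := Real.rpow_pos_of_pos h1 _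
      linarith
    have hak : ∀ k, a k = 0 := fun k => by
      have h3 := (Finset.sum_eq_zero_iff_of_nonneg
        (fun k _ => Real.rpow_nonneg (ha k) t0)).1 hsum k (mem_univ k)
      exact ((Real.rpow_eq_zero_iff_of_nonneg (ha k)).1 h3).1
    have h4 : (∑ k, a k ^ t) = 0 := Finset.sum_eq_zero fun k _ => by
      rw [hak k, Real.zero_rpow ht0.ne']
    rw [h4, Real.zero_rpow (one_div_ne_zero ht0.ne')]
    exact hS0
  · have hkey : ∀ k, a k ^ t ≤ a k ^ t0 * S ^ (t - t0) := by
      intro k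
      rcases eq_or_lt_of_le (ha k) with h0 | hpos
      · rw [← h0, Real.zero_rpow ht0.ne', Real.zero_rpow ht00.ne', zero_mul]
      · have hle : a k ≤ S := by
          have h1 : a k ^ t0 ≤ ∑ j, a j ^ t0 :=
            Finset.single_le_sum (fun j _ => Real.rpow_nonneg (ha j) _) (mem_univ k)
          calc a k = (a k ^ t0) ^ (1/t0) := by
                rw [one_div, Real.rpow_rpow_inv (ha k) ht00.ne']
          _ ≤ S := Real.rpow_le_rpow (Real.rpow_nonneg (ha k) _) h1
                (one_div_pos.mpr ht00).le
        calc a k ^ t = a k ^ t0 * a k ^ (t - t0) := by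
              rw [← Real.rpow_add hpos, add_sub_cancel]
        _ ≤ a k ^ t0 * S ^ (t - t0) :=
              mul_le_mul_of_nonneg_left (Real.rpow_le_rpow (ha k) hle (sub_nonneg.mpr htt))
                (Real.rpow_nonneg (ha k) _)
    calc (∑ k, a k ^ t) ^ (1/t) ≤ (∑ k, a k ^ t0 * S ^ (t - t0)) ^ (1/t) :=
          Real.rpow_le_rpow (sum_nonneg fun k _ => Real.rpow_nonneg (ha k) _)
            (sum_le_sum fun k _ => hkey k) (one_div_pos.mpr ht0).le
    _ = (S ^ t0 * S ^ (t - t0)) ^ (1/t) := by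
          rw [← Finset.sum_mul]
          congr 2
          rw [hS, one_div, Real.rpow_inv_rpow hsum0 ht00.ne']
    _ = S := by
          rw [← Real.rpow_add hSpos, add_sub_cancel, one_div,
            Real.rpow_rpow_inv hS0 ht0.ne']


lemma L2_le_Lr {g : ℝ → ℝ} (hg : Measurable g) (hg0 : ∀ u, 0 ≤ g u) {C : ℝ}
    (hgb : ∀ u, g u ≤ C) {r : ℝ} (hr : 2 ≤ r) :
    (∫ u in (0:ℝ)..1, g u ^ (2:ℝ)) ^ ((1:ℝ)/2) ≤ (∫ u in (0:ℝ)..1, g u ^ r) ^ (1/r) := by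
  have hr0 : 0 < r := by linarith
  set ν := volume.restrict (Set.Ioc (0:ℝ) 1) with hν
  have hprob : IsProbabilityMeasure ν := ⟨by
    rw [hν, Measure.restrict_apply_univ, Real.volume_Ioc]
    norm_num⟩
  set G : ℝ → ℝ≥0∞ := fun u => ENNReal.ofReal (g u) with hG
  have hGm : AEMeasurable G ν := (ENNReal.measurable_ofReal.comp hg).aemeasurable
  have hC0 : 0 ≤ C := le_trans (hg0 0) (hgb 0)
  have hint : ∀ e : ℝ, 0 < e → (∫ u in (0:ℝ)..1, g u ^ e) = (∫⁻ u, G u ^ e ∂ν).toReal := by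
    intro e he
    rw [intervalIntegral.integral_of_le zero_le_one]
    rw [MeasureTheory.integral_eq_lintegral_of_nonneg_ae
      (Filter.Eventually.of_forall fun u => Real.rpow_nonneg (hg0 u) e)
      ((by fun_prop : Measurable fun u => g u ^ e).aestronglyMeasurable)]
    congr 1
    refine lintegral_congr fun u => ?_
    rw [hG]
    exact (ENNReal.ofReal_rpow_of_nonneg (hg0 u) he.le).symm
  have hfin : ∀ e : ℝ, 0 ≤ e → (∫⁻ u, G u ^ e ∂ν) ≠ ⊤ := by
    intro e he
    have hb : (∫⁻ u, G u ^ e ∂ν) ≤ ENNReal.ofReal C ^ e := by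
      calc (∫⁻ u, G u ^ e ∂ν) ≤ ∫⁻ _, ENNReal.ofReal C ^ e ∂ν :=
            lintegral_mono fun u =>
              ENNReal.rpow_le_rpow (ENNReal.ofReal_le_ofReal (hgb u)) he
      _ = ENNReal.ofReal C ^ e := by
            rw [lintegral_const, measure_univ, mul_one]
    exact ne_top_of_le_ne_top
      (ENNReal.rpow_ne_top_of_nonneg he ENNReal.ofReal_ne_top) hb
  have hkey : (∫⁻ u, G u ^ (2:ℝ) ∂ν) ≤ (∫⁻ u, G u ^ r ∂ν) ^ ((2:ℝ)/r) := by
    rcases eq_or_lt_of_le hr with h2 | h2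
    · rw [← h2]
      norm_num
    · have hcj : (r/2).HolderConjugate ((r/2)/((r/2)-1)) :=
        Real.HolderConjugate.conjExponent (by linarith)
      have hH := ENNReal.lintegral_mul_le_Lp_mul_Lq ν hcj
        (hGm.pow_const (2:ℝ)) aemeasurable_const
        (f := fun u => G u ^ (2:ℝ)) (g := fun _ => (1:ℝ≥0∞))
      have hx : (2:ℝ) * (r/2) = r := by field_simp
      simp only [Pi.mul_apply, mul_one, ENNReal.one_rpow, lintegral_one, measure_univ] at hH
      rw [one_div_div] at hH
      calc (∫⁻ u, G u ^ (2:ℝ) ∂ν)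
          ≤ (∫⁻ u, (G u ^ (2:ℝ)) ^ (r/2) ∂ν) ^ ((2:ℝ)/r) := hH
      _ = (∫⁻ u, G u ^ r ∂ν) ^ ((2:ℝ)/r) := by
            congr 1
            exact lintegral_congr fun u => by rw [← ENNReal.rpow_mul, hx]
  have hmono : (∫⁻ u, G u ^ (2:ℝ) ∂ν).toReal ≤ (∫⁻ u, G u ^ r ∂ν).toReal ^ ((2:ℝ)/r) := by
    have h1 : ((∫⁻ u, G u ^ r ∂ν) ^ ((2:ℝ)/r)).toReal = (∫⁻ u, G u ^ r ∂ν).toReal ^ ((2:ℝ)/r) :=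
      (ENNReal.toReal_rpow _ _).symm
    rw [← h1]
    exact ENNReal.toReal_mono
      (ENNReal.rpow_ne_top_of_nonneg (by positivity) (hfin r hr0.le)) hkey
  rw [hint 2 two_pos, hint r hr0]
  calc (∫⁻ u, G u ^ (2:ℝ) ∂ν).toReal ^ ((1:ℝ)/2)
      ≤ ((∫⁻ u, G u ^ r ∂ν).toReal ^ ((2:ℝ)/r)) ^ ((1:ℝ)/2) :=
        Real.rpow_le_rpow ENNReal.toReal_nonneg hmono (by norm_num)
  _ = (∫⁻ u, G u ^ r ∂ν).toReal ^ (1/r) := by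
        rw [← Real.rpow_mul ENNReal.toReal_nonneg]
        congr 1
        field_simp

lemma measurable_realSign : Measurable Real.sign := by
  have h : Real.sign = fun r : ℝ => if r < 0 then (-1:ℝ) else if 0 < r then 1 else 0 := rfl
  rw [h]
  refine Measurable.ite (measurableSet_lt measurable_id measurable_const) measurable_const ?_
  exact Measurable.ite (measurableSet_lt measurable_const measurable_id) measurable_const
    measurable_const

lemma abs_realSign_le (v : ℝ) : |Real.sign v| ≤ 1 := by
  rcases Real.sign_apply_eq v with h | h | h <;> rw [h] <;> norm_num

lemma intervalIntegrable_of_bounded {f : ℝ → ℝ} (hm : Measurable f) {C : ℝ}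
    (hb : ∀ u, |f u| ≤ C) : IntervalIntegrable f MeasureTheory.volume 0 1 := by
  rw [intervalIntegrable_iff]
  haveI : IsFiniteMeasure (volume.restrict (Set.uIoc (0:ℝ) 1)) := by
    constructor
    rw [Measure.restrict_apply_univ, Set.uIoc_of_le zero_le_one, Real.volume_Ioc]
    exact ENNReal.ofReal_lt_top
  exact ⟨hm.aestronglyMeasurable.restrict,
    HasFiniteIntegral.of_bounded (ae_of_all _ fun u => by rw [Real.norm_eq_abs]; exact hb u)⟩

universe uE

set_option maxHeartbeats 1000000 in
lemma lemmaA {𝕜 : Type*} [RCLike 𝕜] {F : Type*} [NormedAddCommGroup F] [NormedSpace 𝕜 F]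
    [NormedSpace ℝ F] [IsScalarTower ℝ 𝕜 F]
    {r : ℝ} (hr2 : 2 ≤ r) {K : ℝ} (hK0 : 0 ≤ K)
    (hK : ∀ (n : ℕ) (y : Fin n → F),
      (∑ k, ‖y k‖ ^ r) ^ (1 / r) ≤
        K * (∫ u in (0:ℝ)..1,
              ‖∑ k : Fin n, Real.sign (Real.sin (2 ^ (k.1 + 1) * Real.pi * u)) • y k‖ ^ (2 : ℝ))
            ^ ((1 : ℝ) / 2)) :
    ∀ (m : ℕ) (E : Fin m → Type uE) [∀ i, NormedAddCommGroup (E i)]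
      [∀ i, NormedSpace 𝕜 (E i)] (T : ContinuousMultilinearMap 𝕜 E F)
      (n : ℕ) (x : ∀ i, Fin n → E i),
      ∑ k : Fin m → Fin n, ‖T (fun i => x i (k i))‖ ^ r
        ≤ (K ^ m * ‖T‖ * ∏ i, weakNorm 𝕜 (x i) 1) ^ r := by
  have hr0 : 0 < r := by linarith
  intro m
  induction m with
  | zero =>
    intro E _ _ T n x
    have hu : (Finset.univ : Finset (Fin 0 → Fin n)) = {fun i => i.elim0} := by
      apply Finset.eq_singleton_iff_unique_mem.mpr
      exact ⟨mem_univ _, fun k _ => funext fun i => i.elim0⟩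
    rw [hu, Finset.sum_singleton]
    have h1 : ‖T (fun i => x i (i.elim0))‖ ≤ ‖T‖ := by
      have := T.le_opNorm (fun i => x i (i.elim0))
      simpa using this
    have h2 : (∏ i : Fin 0, weakNorm 𝕜 (x i) 1) = 1 := by simp
    rw [pow_zero, one_mul, h2, mul_one]
    exact Real.rpow_le_rpow (norm_nonneg _) h1 hr0.le
  | succ m ih =>
    intro E _ _ T n x
    set Φ := T.curryLeft with hΦdef
    set w0 := weakNorm 𝕜 (x 0) 1 with hw0def
    set W := (∏ i : Fin m, weakNorm 𝕜 (x i.succ) 1 : ℝ) with hWdef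
    have hw0 : 0 ≤ w0 := weakNorm_nonneg 𝕜 (x 0) one_pos
    have hW : 0 ≤ W := prod_nonneg fun i _ => weakNorm_nonneg 𝕜 (x i.succ) one_pos
    set c : Fin n → ℝ → ℝ := fun j u => Real.sign (Real.sin (2 ^ (j.1 + 1) * Real.pi * u))
      with hcdef
    set z : ℝ → E 0 := fun u => ∑ j, ((c j u : ℝ) : 𝕜) • x 0 j with hzdef
    have hzb : ∀ u, ‖z u‖ ≤ w0 := fun u =>
      norm_sum_smul_le_weakNorm 𝕜 (x 0) (fun j => c j u) (fun j => abs_realSign_le _)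
    have hΦb : ∀ u, ‖Φ (z u)‖ ≤ ‖T‖ * w0 := by
      intro u
      calc ‖Φ (z u)‖ ≤ ‖Φ‖ * ‖z u‖ := Φ.le_opNorm _
      _ ≤ ‖T‖ * w0 := by
          rw [hΦdef, T.curryLeft_norm]
          exact mul_le_mul_of_nonneg_left (hzb u) (norm_nonneg T)
    have hc_meas : Measurable fun u => (fun j : Fin n => c j u) :=
      measurable_pi_lambda _ (fun j => measurable_realSign.comp
        (Real.continuous_sin.measurable.comp (measurable_id.const_mul _)))
    -- the pointwise functions
    set G : (Fin m → Fin n) → ℝ → ℝ :=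
      fun k' u => ‖Φ (z u) (fun i => x i.succ (k' i))‖ with hGdef
    have hid : ∀ (k' : Fin m → Fin n) (u : ℝ),
        Φ (z u) (fun i => x i.succ (k' i))
          = ∑ j, ((c j u : ℝ) : 𝕜) • T (Fin.cons (x 0 j) (fun i => x i.succ (k' i))) := by
      intro k' u
      have h0 : Φ (z u) (fun i => x i.succ (k' i))
          = ((ContinuousMultilinearMap.apply 𝕜 (fun i : Fin m => E i.succ) F
              (fun i => x i.succ (k' i))).comp Φ) (z u) := rfl
      have h1 : z u = ∑ j, ((c j u : ℝ) : 𝕜) • x 0 j := rfl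
      rw [h0, h1, map_sum]
      refine sum_congr rfl fun j _ => ?_
      rw [ContinuousLinearMap.map_smul]
      rfl
    have hGm : ∀ k', Measurable (G k') := by
      intro k'
      have heq : G k' = fun u =>
          ‖∑ j, ((c j u : ℝ) : 𝕜) • T (Fin.cons (x 0 j) (fun i => x i.succ (k' i)))‖ := by
        funext u
        exact congrArg norm (hid k' u)
      rw [heq]
      have hcont : Continuous fun a : Fin n → ℝ =>
          ‖∑ j, ((a j : ℝ) : 𝕜) • T (Fin.cons (x 0 j) (fun i => x i.succ (k' i)))‖ := by
        have hc2 : Continuous fun a : Fin n → ℝ =>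
            ∑ j, ((a j : ℝ) : 𝕜) • T (Fin.cons (x 0 j) (fun i => x i.succ (k' i))) :=
          continuous_finset_sum _ fun j _ =>
            ((RCLike.continuous_ofReal.comp (continuous_apply j)).smul continuous_const)
        exact hc2.norm
      exact hcont.measurable.comp hc_meas
    have hGb : ∀ k' u, G k' u ≤ (‖T‖ * w0) * ∏ i, ‖x i.succ (k' i)‖ := by
      intro k' u
      calc G k' u ≤ ‖Φ (z u)‖ * ∏ i, ‖x i.succ (k' i)‖ := (Φ (z u)).le_opNorm _
      _ ≤ (‖T‖ * w0) * ∏ i, ‖x i.succ (k' i)‖ :=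
          mul_le_mul_of_nonneg_right (hΦb u) (prod_nonneg fun i _ => norm_nonneg _)
    have hG0 : ∀ k' u, 0 ≤ G k' u := fun k' u => norm_nonneg _
    have hGint : ∀ k', IntervalIntegrable (fun u => G k' u ^ r) volume 0 1 := by
      intro k'
      have hGk := hGm k'
      have hmr : Measurable fun u => G k' u ^ r := by fun_prop
      refine intervalIntegrable_of_bounded hmr
        (C := ((‖T‖ * w0) * ∏ i, ‖x i.succ (k' i)‖) ^ r) fun u => ?_
      rw [abs_of_nonneg (Real.rpow_nonneg (hG0 k' u) r)]
      exact Real.rpow_le_rpow (hG0 k' u) (hGb k' u) hr0.le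
    -- core estimate for a fixed tail
    have hcore : ∀ k' : Fin m → Fin n,
        (∑ j : Fin n, ‖T (Fin.cons (x 0 j) (fun i => x i.succ (k' i)))‖ ^ r)
          ≤ K ^ r * ∫ u in (0:ℝ)..1, G k' u ^ r := by
      intro k'
      set y : Fin n → F := fun j => T (Fin.cons (x 0 j) (fun i => x i.succ (k' i))) with hydef
      have hiden : ∀ u, (∑ j : Fin n,
          Real.sign (Real.sin (2 ^ (j.1 + 1) * Real.pi * u)) • y j)
            = Φ (z u) (fun i => x i.succ (k' i)) := by
        intro u
        rw [hid k' u]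
        refine sum_congr rfl fun j _ => ?_
        exact RCLike.real_smul_eq_coe_smul (K := 𝕜) _ _
      have hcot := hK n y
      have hcot2 : (∑ j, ‖y j‖ ^ r) ^ (1/r)
          ≤ K * (∫ u in (0:ℝ)..1, G k' u ^ (2:ℝ)) ^ ((1:ℝ)/2) := by
        refine le_trans hcot (le_of_eq ?_)
        congr 2
        refine intervalIntegral.integral_congr fun u _ => ?_
        rw [hiden u]
      have hgm' : Measurable (G k') := hGm k'
      have hL2 : (∫ u in (0:ℝ)..1, G k' u ^ (2:ℝ)) ^ ((1:ℝ)/2)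
          ≤ (∫ u in (0:ℝ)..1, G k' u ^ r) ^ (1/r) :=
        L2_le_Lr hgm' (hG0 k') (hGb k') hr2
      have hfinal : (∑ j, ‖y j‖ ^ r) ^ (1/r)
          ≤ K * (∫ u in (0:ℝ)..1, G k' u ^ r) ^ (1/r) :=
        le_trans hcot2 (mul_le_mul_of_nonneg_left hL2 hK0)
      have hI0 : 0 ≤ ∫ u in (0:ℝ)..1, G k' u ^ r :=
        intervalIntegral.integral_nonneg zero_le_one
          (fun u _ => Real.rpow_nonneg (hG0 k' u) r)
      have hs0 : 0 ≤ ∑ j, ‖y j‖ ^ r :=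
        sum_nonneg fun j _ => Real.rpow_nonneg (norm_nonneg _) r
      have h2 := Real.rpow_le_rpow (Real.rpow_nonneg hs0 _) hfinal hr0.le
      rw [one_div, Real.rpow_inv_rpow hs0 hr0.ne',
        Real.mul_rpow hK0 (Real.rpow_nonneg hI0 _),
        Real.rpow_inv_rpow hI0 hr0.ne'] at h2
      exact h2
    -- pointwise induction bound
    have hpoint : ∀ u, (∑ k' : Fin m → Fin n, G k' u ^ r) ≤ ((K ^ m * ‖T‖ * w0) * W) ^ r := by
      intro u
      have h1 := ih (fun i => E i.succ) (Φ (z u)) n (fun i => x i.succ)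
      refine le_trans h1 (Real.rpow_le_rpow ?_ ?_ hr0.le)
      · refine mul_nonneg (mul_nonneg (pow_nonneg hK0 m) (norm_nonneg _)) ?_
        exact prod_nonneg fun i _ => weakNorm_nonneg 𝕜 _ one_pos
      · have h3 : K ^ m * ‖Φ (z u)‖ ≤ K ^ m * (‖T‖ * w0) :=
          mul_le_mul_of_nonneg_left (hΦb u) (pow_nonneg hK0 m)
        calc K ^ m * ‖Φ (z u)‖ * W ≤ K ^ m * (‖T‖ * w0) * W :=
              mul_le_mul_of_nonneg_right h3 hW
        _ = (K ^ m * ‖T‖ * w0) * W := by ring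
    -- index decomposition
    have hsum_eq : (∑ k : Fin (m+1) → Fin n, ‖T (fun i => x i (k i))‖ ^ r)
        = ∑ k' : Fin m → Fin n, ∑ j : Fin n,
            ‖T (Fin.cons (x 0 j) (fun i => x i.succ (k' i)))‖ ^ r := by
      calc (∑ k : Fin (m+1) → Fin n, ‖T (fun i => x i (k i))‖ ^ r)
          = ∑ p : Fin n × (Fin m → Fin n),
              ‖T (Fin.cons (x 0 p.1) (fun i => x i.succ (p.2 i)))‖ ^ r := by
            refine (Fintype.sum_equiv (Fin.consEquiv fun _ : Fin (m+1) => Fin n) _ _ ?_).symm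
            intro p
            have hfun : (fun i => x i ((Fin.consEquiv fun _ : Fin (m+1) => Fin n) p i))
                = Fin.cons (x 0 p.1) (fun i => x i.succ (p.2 i)) := by
              funext i
              refine Fin.cases ?_ (fun j => ?_) i
              · simp [Fin.consEquiv]
              · simp [Fin.consEquiv]
            rw [hfun]
      _ = ∑ j : Fin n, ∑ k' : Fin m → Fin n,
              ‖T (Fin.cons (x 0 j) (fun i => x i.succ (k' i)))‖ ^ r := Fintype.sum_prod_type _
      _ = _ := Finset.sum_comm
    rw [hsum_eq]
    calc ∑ k' : Fin m → Fin n, ∑ j : Fin n,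
            ‖T (Fin.cons (x 0 j) (fun i => x i.succ (k' i)))‖ ^ r
        ≤ ∑ k' : Fin m → Fin n, K ^ r * ∫ u in (0:ℝ)..1, G k' u ^ r :=
          sum_le_sum fun k' _ => hcore k'
    _ = K ^ r * ∫ u in (0:ℝ)..1, ∑ k' : Fin m → Fin n, G k' u ^ r := by
          rw [← Finset.mul_sum, ← intervalIntegral.integral_finset_sum
            (fun k' _ => hGint k')]
    _ ≤ K ^ r * ((K ^ m * ‖T‖ * w0) * W) ^ r := by
          have hsm : Measurable fun u => ∑ k' : Fin m → Fin n, G k' u ^ r := by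
            apply Finset.measurable_sum
            intro k' _
            have hGk := hGm k'
            fun_prop
          have hsint : IntervalIntegrable (fun u => ∑ k' : Fin m → Fin n, G k' u ^ r)
              volume 0 1 := by
            refine intervalIntegrable_of_bounded hsm
              (C := ((K ^ m * ‖T‖ * w0) * W) ^ r) fun u => ?_
            rw [abs_of_nonneg (sum_nonneg fun k' _ => Real.rpow_nonneg (hG0 k' u) r)]
            exact hpoint u
          have hmono := intervalIntegral.integral_mono_on (μ := volume) zero_le_one hsint
            (intervalIntegrable_const (c := ((K ^ m * ‖T‖ * w0) * W) ^ r))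
            (fun u _ => hpoint u)
          have hconst : (∫ _ in (0:ℝ)..1, ((K ^ m * ‖T‖ * w0) * W) ^ r)
              = ((K ^ m * ‖T‖ * w0) * W) ^ r := by
            rw [intervalIntegral.integral_const]
            norm_num
          rw [hconst] at hmono
          exact mul_le_mul_of_nonneg_left hmono (Real.rpow_nonneg hK0 r)
    _ = (K ^ (m+1) * ‖T‖ * ∏ i : Fin (m+1), weakNorm 𝕜 (x i) 1) ^ r := by
          have hTw : (0:ℝ) ≤ K ^ m * ‖T‖ * w0 * W :=
            mul_nonneg (mul_nonneg (mul_nonneg (pow_nonneg hK0 m) (norm_nonneg T)) hw0) hW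
          rw [← Real.mul_rpow hK0 hTw]
          congr 1
          rw [Fin.prod_univ_succ, pow_succ]
          rw [hw0def, hWdef]
          ring

set_option maxHeartbeats 1000000 in
lemma lemmaB {𝕜 : Type*} [RCLike 𝕜] {m : ℕ} {E : Fin m → Type*}
    [∀ i, NormedAddCommGroup (E i)] [∀ i, NormedSpace 𝕜 (E i)]
    {F : Type*} [NormedAddCommGroup F] [NormedSpace 𝕜 F]
    (T : ContinuousMultilinearMap 𝕜 E F) {A r s p t0 : ℝ}
    (hr0 : 0 < r) (hA0 : 0 ≤ A) (hcj : s.HolderConjugate p)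
    (ht0 : 1/t0 = 1/r - m/p) (ht00 : 0 < t0) {n : ℕ}
    (hmain : ∀ y : ∀ i, Fin n → E i,
      ∑ k : Fin m → Fin n, ‖T (fun i => y i (k i))‖ ^ r
        ≤ (A * ∏ i, weakNorm 𝕜 (y i) 1) ^ r)
    (x : ∀ i, Fin n → E i) :
    ∑ k : Fin m → Fin n, ‖T (fun i => x i (k i))‖ ^ t0
      ≤ (A * ∏ i, weakNorm 𝕜 (x i) s) ^ t0 := by
  have hp0 : 0 < p := hcj.symm.pos
  have hs0 : 0 < s := hcj.pos
  set a : (Fin m → Fin n) → ℝ := fun k => ‖T (fun i => x i (k i))‖ with hadef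
  have ha0 : ∀ k, 0 ≤ a k := fun k => norm_nonneg _
  set Z := A * ∏ i, weakNorm 𝕜 (x i) s with hZdef
  have hZ0 : 0 ≤ Z :=
    mul_nonneg hA0 (prod_nonneg fun i _ => weakNorm_nonneg 𝕜 (x i) hs0)
  set At := ∑ k : Fin m → Fin n, a k ^ t0 with hAtdef
  have hAt0 : 0 ≤ At := sum_nonneg fun k _ => Real.rpow_nonneg (ha0 k) _
  rcases eq_or_lt_of_le hAt0 with hAt0' | hAtpos
  · rw [← hAt0']
    exact Real.rpow_nonneg hZ0 _
  -- main case
  set M : Fin m → Fin n → ℝ :=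
    fun i j => ∑ k ∈ univ.filter (fun k : Fin m → Fin n => k i = j), a k ^ t0 with hMdef
  have hM0 : ∀ i j, 0 ≤ M i j :=
    fun i j => sum_nonneg fun k _ => Real.rpow_nonneg (ha0 k) _
  have hMsum : ∀ i, ∑ j, M i j = At :=
    fun i => Finset.sum_fiberwise univ (fun k => k i) (fun k => a k ^ t0)
  have hMa : ∀ (i : Fin m) (k : Fin m → Fin n), a k ^ t0 ≤ M i (k i) := by
    intro i k
    exact Finset.single_le_sum (f := fun k => a k ^ t0)
      (fun j _ => Real.rpow_nonneg (ha0 j) _) (mem_filter.mpr ⟨mem_univ _, rfl⟩)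
  set σ : Fin m → Fin n → ℝ := fun i j => (M i j / At) ^ (1/p) with hσdef
  have hσ0 : ∀ i j, 0 ≤ σ i j := fun i j => Real.rpow_nonneg (div_nonneg (hM0 i j) hAt0) _
  have hσp : ∀ i j, σ i j ^ p = M i j / At := by
    intro i j
    rw [hσdef, one_div, Real.rpow_inv_rpow (div_nonneg (hM0 i j) hAt0) hp0.ne']
  have hσsum : ∀ i, ∑ j, σ i j ^ p = 1 := by
    intro i
    rw [Finset.sum_congr rfl fun j _ => hσp i j, ← Finset.sum_div, hMsum, div_self hAtpos.ne']
  set y : ∀ i, Fin n → E i := fun i j => ((σ i j : ℝ) : 𝕜) • x i j with hydef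
  have hwy : ∀ i, weakNorm 𝕜 (y i) 1 ≤ weakNorm 𝕜 (x i) s := by
    intro i
    have h := weakNorm_smul_le 𝕜 (x i) (σ i) (hσ0 i) hcj
    rwa [hσsum i, Real.one_rpow, one_mul] at h
  have hTy : ∀ k : Fin m → Fin n,
      ‖T (fun i => y i (k i))‖ = (∏ i, σ i (k i)) * a k := by
    intro k
    have h1 : T (fun i => y i (k i))
        = (∏ i, ((σ i (k i) : ℝ) : 𝕜)) • T (fun i => x i (k i)) :=
      T.map_smul_univ (fun i => ((σ i (k i) : ℝ) : 𝕜)) (fun i => x i (k i))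
    rw [h1, norm_smul, hadef]
    congr 1
    have h2 : (∏ i, ((σ i (k i) : ℝ) : 𝕜)) = ((∏ i, σ i (k i) : ℝ) : 𝕜) := by
      norm_cast
    rw [h2, RCLike.norm_ofReal, abs_of_nonneg (prod_nonneg fun i _ => hσ0 i (k i))]
  -- exponent arithmetic
  set β := (m : ℝ) * r / p with hβdef
  have hβ0 : 0 ≤ β := div_nonneg (mul_nonneg (Nat.cast_nonneg m) hr0.le) hp0.le
  have hrt0 : r / t0 = 1 - β := by
    have h1 : r * (1/t0) = r * (1/r - m/p) := by rw [ht0]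
    rw [mul_sub, mul_one_div, mul_one_div, div_self hr0.ne'] at h1
    rw [h1, hβdef]
    ring
  have hr_eq : r = (1 - β) * t0 := (div_eq_iff ht00.ne').1 hrt0
  have hexp : t0 * ((1/p) * r * (m:ℝ)) + r = t0 := by
    have hb : t0 * β = t0 * ((1/p) * r * (m:ℝ)) := by rw [hβdef]; ring
    have hc : r + t0 * β = t0 := by rw [hr_eq]; ring
    linarith [hc, hb]
  -- key inequality
  set Q := ∑ k : Fin m → Fin n, ((∏ i, σ i (k i)) * a k) ^ r with hQdef
  have hkey : At ^ (r / t0) ≤ Q := by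
    have h1 : At ^ (r / t0) = ∑ k : Fin m → Fin n, a k ^ t0 / At ^ β := by
      rw [hrt0, Real.rpow_sub hAtpos, Real.rpow_one, hAtdef, Finset.sum_div]
    rw [h1, hQdef]
    refine sum_le_sum fun k _ => ?_
    rcases eq_or_lt_of_le (ha0 k) with hk0 | hkpos
    · rw [← hk0, Real.zero_rpow ht00.ne', zero_div, mul_zero, Real.zero_rpow hr0.ne']
    · have hprod_r : ((∏ i, σ i (k i)) * a k) ^ r
          = (∏ i, σ i (k i) ^ r) * a k ^ r := by
        rw [Real.mul_rpow (prod_nonneg fun i _ => hσ0 i (k i)) (ha0 k)]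
        congr 1
        exact (Real.finset_prod_rpow univ _ (fun i _ => hσ0 i (k i)) r).symm
      have hσr : ∀ i, σ i (k i) ^ r = (M i (k i) / At) ^ ((1/p) * r) := by
        intro i
        rw [hσdef, ← Real.rpow_mul (div_nonneg (hM0 i (k i)) hAt0)]
      have hterm : ∀ i : Fin m, (a k ^ t0 / At) ^ ((1/p) * r) ≤ σ i (k i) ^ r := by
        intro i
        rw [hσr i]
        exact Real.rpow_le_rpow (div_nonneg (Real.rpow_nonneg (ha0 k) _) hAt0)
          ((div_le_div_iff_of_pos_right hAtpos).mpr (hMa i k))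
          (mul_nonneg (one_div_nonneg.mpr hp0.le) hr0.le)
      have hβe : (1/p) * r * (m:ℝ) = β := by rw [hβdef]; ring
      have h2 : (∏ _i : Fin m, (a k ^ t0 / At) ^ ((1/p) * r))
          = (a k ^ t0 / At) ^ ((1/p) * r * (m:ℝ)) := by
        rw [Finset.prod_const, Finset.card_univ, Fintype.card_fin,
          ← Real.rpow_natCast ((a k ^ t0 / At) ^ ((1/p) * r)) m,
          ← Real.rpow_mul (div_nonneg (Real.rpow_nonneg (ha0 k) _) hAt0)]
      have h3 : (a k ^ t0 / At) ^ ((1/p) * r * (m:ℝ)) * a k ^ r = a k ^ t0 / At ^ β := by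
        rw [Real.div_rpow (Real.rpow_nonneg (ha0 k) _) hAt0,
          ← Real.rpow_mul (ha0 k), div_mul_eq_mul_div, ← Real.rpow_add hkpos, hexp, hβe]
      calc a k ^ t0 / At ^ β
          = (a k ^ t0 / At) ^ ((1/p) * r * (m:ℝ)) * a k ^ r := h3.symm
      _ ≤ (∏ i, σ i (k i) ^ r) * a k ^ r := by
            rw [← h2]
            exact mul_le_mul_of_nonneg_right
              (Finset.prod_le_prod
                (fun i _ => Real.rpow_nonneg
                  (div_nonneg (Real.rpow_nonneg (ha0 k) _) hAt0) _)
                (fun i _ => hterm i))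
              (Real.rpow_nonneg (ha0 k) _)
      _ = ((∏ i, σ i (k i)) * a k) ^ r := hprod_r.symm
  have hQle : Q ≤ Z ^ r := by
    have h1 : Q = ∑ k : Fin m → Fin n, ‖T (fun i => y i (k i))‖ ^ r := by
      refine sum_congr rfl fun k _ => ?_
      rw [hTy k]
    rw [h1]
    refine le_trans (hmain y) (Real.rpow_le_rpow ?_ ?_ hr0.le)
    · exact mul_nonneg hA0 (prod_nonneg fun i _ => weakNorm_nonneg 𝕜 (y i) one_pos)
    · rw [hZdef]
      exact mul_le_mul_of_nonneg_left
        (Finset.prod_le_prod (fun i _ => weakNorm_nonneg 𝕜 (y i) one_pos)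
          (fun i _ => hwy i)) hA0
  have h5 : At ^ (1/t0) ≤ Z := by
    have h6 := Real.rpow_le_rpow (Real.rpow_nonneg hAt0 _) (le_trans hkey hQle)
      (one_div_nonneg.mpr hr0.le)
    rw [← Real.rpow_mul hAt0] at h6
    rw [(show (r/t0) * (1/r) = 1/t0 by
      field_simp)] at h6
    rwa [one_div r, Real.rpow_rpow_inv hZ0 hr0.ne'] at h6
  have h7 := Real.rpow_le_rpow (Real.rpow_nonneg hAt0 _) h5 ht00.le
  rwa [one_div, Real.rpow_inv_rpow hAt0 ht00.ne'] at h7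

theorem stmt8 {𝕜 : Type*} [RCLike 𝕜] {m : ℕ} (hm : 1 ≤ m)
    {E : Fin m → Type*} [∀ i, NormedAddCommGroup (E i)] [∀ i, NormedSpace 𝕜 (E i)]
    [∀ i, CompleteSpace (E i)]
    {F : Type*} [NormedAddCommGroup F] [NormedSpace 𝕜 F] [NormedSpace ℝ F]
    [IsScalarTower ℝ 𝕜 F] [CompleteSpace F]
    {r s t : ℝ} (hr2 : 2 ≤ r) (hcot : HasCotype F r)
    (hs1 : 1 ≤ s) (hs2 : s < 2)
    -- `m < s / (r (s-1))`, written so that it is vacuously true when `s = 1`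
    (hms : (m : ℝ) * (r * (s - 1)) < s)
    (ht : s * r / (s - m * s * r + m * r) ≤ t)
    (T : ContinuousMultilinearMap 𝕜 E F) :
    ∃ C : ℝ, 0 ≤ C ∧ ∀ (n : ℕ), 0 < n → ∀ x : ∀ i, Fin n → E i,
      (∑ k : Fin m → Fin n, ‖T (fun i => x i (k i))‖ ^ t) ^ (1 / t)
        ≤ C * ∏ i, weakNorm 𝕜 (x i) s := by
  obtain ⟨K, hK0, hK⟩ := hcot
  have hr0 : 0 < r := by linarith
  have hs0 : 0 < s := by linarith
  have hA0 : 0 ≤ K ^ m * ‖T‖ := mul_nonneg (pow_nonneg hK0 m) (norm_nonneg _)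
  have hmain : ∀ (n : ℕ) (y : ∀ i, Fin n → E i),
      ∑ k : Fin m → Fin n, ‖T (fun i => y i (k i))‖ ^ r
        ≤ (K ^ m * ‖T‖ * ∏ i, weakNorm 𝕜 (y i) 1) ^ r := by
    intro n y
    exact lemmaA hr2 hK0 hK m E T n y
  have hD : 0 < s - m * s * r + m * r := by nlinarith [hms]
  set t0 := s * r / (s - m * s * r + m * r) with ht0def
  have ht00 : 0 < t0 := div_pos (mul_pos hs0 hr0) hD
  have ht0t : t0 ≤ t := ht
  have htpos : 0 < t := lt_of_lt_of_le ht00 ht0t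
  have hZ0 : ∀ n, ∀ x : ∀ i, Fin n → E i, 0 ≤ K ^ m * ‖T‖ * ∏ i, weakNorm 𝕜 (x i) s :=
    fun n x => mul_nonneg hA0 (prod_nonneg fun i _ => weakNorm_nonneg 𝕜 (x i) hs0)
  refine ⟨K ^ m * ‖T‖, hA0, fun n _hn x => ?_⟩
  have hkey : ∑ k : Fin m → Fin n, ‖T (fun i => x i (k i))‖ ^ t0
      ≤ (K ^ m * ‖T‖ * ∏ i, weakNorm 𝕜 (x i) s) ^ t0 := by
    rcases eq_or_lt_of_le hs1 with hseq | hslt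
    · have ht0r : t0 = r := by
        rw [ht0def, ← hseq]
        have h1 : (1:ℝ) - m * 1 * r + m * r = 1 := by ring
        rw [h1, one_mul, div_one]
      rw [ht0r, ← hseq]
      exact hmain n x
    · have hcj : s.HolderConjugate (s/(s-1)) := Real.HolderConjugate.conjExponent hslt
      have hs1' : (0:ℝ) < s - 1 := by linarith
      have hrel : 1/t0 = 1/r - m/(s/(s-1)) := by
        rw [ht0def, one_div_div, div_div_eq_mul_div]
        field_simp
        ring
      exact lemmaB T hr0 hA0 hcj hrel ht00 (hmain n) x
  have hfin := lp_norm_mono (fun k : Fin m → Fin n => ‖T (fun i => x i (k i))‖)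
      (fun k => norm_nonneg _) ht00 ht0t
  calc (∑ k : Fin m → Fin n, ‖T (fun i => x i (k i))‖ ^ t) ^ (1/t)
      ≤ (∑ k : Fin m → Fin n, ‖T (fun i => x i (k i))‖ ^ t0) ^ (1/t0) := hfin
  _ ≤ ((K ^ m * ‖T‖ * ∏ i, weakNorm 𝕜 (x i) s) ^ t0) ^ (1/t0) :=
      Real.rpow_le_rpow (sum_nonneg fun k _ => Real.rpow_nonneg (norm_nonneg _) _) hkey
        (one_div_nonneg.mpr ht00.le)
  _ = K ^ m * ‖T‖ * ∏ i, weakNorm 𝕜 (x i) s := by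
      rw [one_div, Real.rpow_rpow_inv (hZ0 n x) ht00.ne']
end
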